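/- Let $a_{-1}, a_0, a_1, \ldots, a_t$ be a nondecreasing sequence of positive real numbers. Then $\sum_{k=0}^{t} \frac{a_k - a_{k-1}}{a_k\,(1 + \log(a_k/a_{-1}))^2} \le 1$. -/

import Mathlib

open Finset

/-- Lemma 6 of the paper, with indices shifted so that `a 0` plays the role of
`a₋₁`: for a positive nondecreasing sequence,
`∑_{k=0}^t (a_k - a_{k-1}) / (a_k (1 + log(a_k / a₋₁))²) ≤ 1`. -/
theorem log_weighted_increment_sum (t : ℕ) (a : ℕ → ℝ)
    (hpos : ∀ k, k ≤ t + 1 → 0 < a k)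
    (hmono : ∀ k, k ≤ t → a k ≤ a (k + 1)) :
    ∑ k ∈ Finset.range (t + 1),
        (a (k + 1) - a k) / (a (k + 1) * (1 + Real.log (a (k + 1) / a 0)) ^ 2)
      ≤ 1 := by
  set L : ℕ → ℝ := fun k => 1 + Real.log (a k / a 0) with hL
  have ha0 : 0 < a 0 := hpos 0 (by omega)
  have hmono' : ∀ k, k ≤ t + 1 → a 0 ≤ a k := by
    intro k hk
    induction k with
    | zero => exact le_refl _
    | succ n ih => exact le_trans (ih (by omega)) (hmono n (by omega))
  have hL1 : ∀ k, k ≤ t + 1 → 1 ≤ L k := by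
    intro k hk
    have h0 : 0 ≤ Real.log (a k / a 0) := Real.log_nonneg (by
      rw [le_div_iff₀ ha0]; simpa using hmono' k hk)
    simp only [hL]; linarith
  have key : ∀ k ∈ Finset.range (t + 1),
      (a (k + 1) - a k) / (a (k + 1) * L (k + 1) ^ 2)
        ≤ 1 / L k - 1 / L (k + 1) := by
    intro k hk
    simp only [Finset.mem_range] at hk
    have hak : 0 < a k := hpos k (by omega)
    have hak1 : 0 < a (k + 1) := hpos (k + 1) (by omega)
    have hLk : 1 ≤ L k := hL1 k (by omega)
    have hLk1 : 1 ≤ L (k + 1) := hL1 (k + 1) (by omega)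
    have hLkpos : 0 < L k := by linarith
    have hLk1pos : 0 < L (k + 1) := by linarith
    have hd : L (k + 1) - L k = Real.log (a (k + 1) / a k) := by
      simp only [hL]
      rw [Real.log_div (ne_of_gt hak1) (ne_of_gt ha0),
        Real.log_div (ne_of_gt hak) (ne_of_gt ha0),
        Real.log_div (ne_of_gt hak1) (ne_of_gt hak)]
      ring
    have hmk : a k ≤ a (k + 1) := hmono k (by omega)
    have hLle : L k ≤ L (k + 1) := by
      simp only [hL]
      have h : a k / a 0 ≤ a (k + 1) / a 0 := by gcongr
      have := Real.log_le_log (by positivity) h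
      linarith
    have hlog : (a (k + 1) - a k) / a (k + 1) ≤ Real.log (a (k + 1) / a k) := by
      have h1 : Real.log (a k / a (k + 1)) ≤ a k / a (k + 1) - 1 :=
        Real.log_le_sub_one_of_pos (by positivity)
      have h2 : Real.log (a k / a (k + 1)) = - Real.log (a (k + 1) / a k) := by
        rw [Real.log_div (ne_of_gt hak) (ne_of_gt hak1),
          Real.log_div (ne_of_gt hak1) (ne_of_gt hak)]
        ring
      rw [h2] at h1
      have : a k / a (k + 1) - 1 = -((a (k + 1) - a k) / a (k + 1)) := by
        field_simp
        ring
      rw [this] at h1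
      linarith
    have hstep : (a (k + 1) - a k) / (a (k + 1) * L (k + 1) ^ 2)
        ≤ (L (k + 1) - L k) / (L k * L (k + 1)) := by
      have hX : (a (k + 1) - a k) / (a (k + 1) * L (k + 1) ^ 2)
          = ((a (k + 1) - a k) / a (k + 1)) / L (k + 1) ^ 2 := by
        rw [div_div]
      rw [hX]
      apply div_le_div₀ (by linarith) (hlog.trans (le_of_eq hd.symm))
        (by positivity)
      have : L k * L (k + 1) ≤ L (k + 1) * L (k + 1) := by nlinarith
      nlinarith
    have heq : (L (k + 1) - L k) / (L k * L (k + 1)) = 1 / L k - 1 / L (k + 1) := by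
      field_simp
    linarith [hstep, heq ▸ hstep]
  calc ∑ k ∈ Finset.range (t + 1),
        (a (k + 1) - a k) / (a (k + 1) * L (k + 1) ^ 2)
      ≤ ∑ k ∈ Finset.range (t + 1), (1 / L k - 1 / L (k + 1)) :=
        Finset.sum_le_sum key
    _ = 1 / L 0 - 1 / L (t + 1) := by
        rw [Finset.sum_range_sub' (fun k => 1 / L k)]
    _ ≤ 1 := by
        have hL0 : L 0 = 1 := by simp [hL, div_self (ne_of_gt ha0)]
        have hLt : 1 ≤ L (t + 1) := hL1 (t + 1) le_rfl
        have : 0 ≤ 1 / L (t + 1) := by positivity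
        rw [hL0]
        simp
        linarith
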